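/- Let φ : ℝ² → [0,∞) be a norm whose closed unit ball {v ∈ ℝ² : φ(v) ≤ 1} is a strictly convex set, and let X ∈ ℝ² with φ(X) = 1. Then the unordered pair {Y, Z} with φ(Y) = φ(Z) = 1 and X + Y + Z = 0 is unique: if (X, Y, Z) and (X, Y', Z') are both admissible triplets, then {Y, Z} = {Y', Z'}. -/

import Mathlib

noncomputable section
open Set

abbrev E2 : Type := EuclideanSpace ℝ (Fin 2)

/-- Uniqueness part of Lemma 4.11 of the paper in the strictly convex case: for a norm
with strictly convex unit ball, the unordered pair completing a unit vector `X` to an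
admissible triplet is unique. -/
theorem admissible_triplet_unique_of_strictConvex
    (φ : E2 → ℝ)
    (hφ_triangle : ∀ x y : E2, φ (x + y) ≤ φ x + φ y)
    (hφ_hom : ∀ (c : ℝ) (x : E2), φ (c • x) = |c| * φ x)
    (hφ_pos : ∀ x : E2, φ x = 0 → x = 0)
    (hconv : StrictConvex ℝ {v : E2 | φ v ≤ 1})
    (X : E2) (hX : φ X = 1) :
    ∀ Y Z Y' Z' : E2,
      φ Y = 1 → φ Z = 1 → X + Y + Z = 0 →
      φ Y' = 1 → φ Z' = 1 → X + Y' + Z' = 0 →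
      (Y = Y' ∧ Z = Z') ∨ (Y = Z' ∧ Z = Y') := by
  intro Y Z Y' Z' hY hZ hYZ hY' hZ' hYZ'
  -- basic facts about φ
  have hφ0 : φ 0 = 0 := by
    have := hφ_hom 0 0; simpa using this
  have hneg : ∀ x : E2, φ (-x) = φ x := by
    intro x; have := hφ_hom (-1) x; simpa using this
  set S : E2 := -X with hSdef
  have hS : φ S = 1 := by rw [hSdef, hneg]; exact hX
  have hS0 : S ≠ 0 := by
    intro h; rw [h, hφ0] at hS; norm_num at hS
  -- points in the interior of the ball have φ < 1
  have hint : ∀ x ∈ interior {v : E2 | φ v ≤ 1}, φ x < 1 := by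
    intro x hx
    have hx1' : x ∈ {v : E2 | φ v ≤ 1} := interior_subset hx
    have hx1 : φ x ≤ 1 := hx1'
    rcases lt_or_eq_of_le hx1 with h | h
    · exact h
    exfalso
    have hxne : x ≠ 0 := by
      rintro rfl; rw [hφ0] at h; norm_num at h
    obtain ⟨δ, δpos, hδ⟩ := Metric.isOpen_iff.mp isOpen_interior x hx
    have hnx : 0 < ‖x‖ := norm_pos_iff.mpr hxne
    set c : ℝ := 1 + δ / (2 * ‖x‖) with hc
    have hc1 : 1 < c := by
      have : 0 < δ / (2 * ‖x‖) := by positivity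
      simp [hc]; linarith
    have hcx : c • x ∈ Metric.ball x δ := by
      rw [Metric.mem_ball, dist_eq_norm]
      have h1 : c • x - x = (δ / (2 * ‖x‖)) • x := by
        rw [hc]; module
      rw [h1, norm_smul, Real.norm_eq_abs,
        abs_of_pos (show (0:ℝ) < δ / (2 * ‖x‖) by positivity), div_mul_eq_mul_div,
        div_lt_iff₀ (by positivity)]
      nlinarith [hnx, δpos]
    have hle' : c • x ∈ {v : E2 | φ v ≤ 1} := interior_subset (hδ hcx)
    have hle : φ (c • x) ≤ 1 := hle'
    rw [hφ_hom, abs_of_pos (by linarith), ← h] at hle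
    nlinarith [h]
  -- strict convexity: strict combinations of ball points have φ < 1
  have hopen : ∀ a c : E2, φ a ≤ 1 → φ c ≤ 1 → a ≠ c →
      ∀ θ₁ θ₂ : ℝ, 0 < θ₁ → 0 < θ₂ → θ₁ + θ₂ = 1 → φ (θ₁ • a + θ₂ • c) < 1 := by
    intro a c ha hc hac θ₁ θ₂ h1 h2 h12
    exact hint _ (hconv ha hc hac h1 h2 h12)
  -- the determinant functional vanishing on S
  set f : E2 → ℝ := fun v => S 0 * v 1 - S 1 * v 0 with hf
  have hker : ∀ v : E2, f v = 0 → ∃ a : ℝ, v = a • S := by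
    intro v hv
    simp only [hf] at hv
    have hS01 : S 0 ≠ 0 ∨ S 1 ≠ 0 := by
      by_contra h
      push_neg at h
      exact hS0 (by ext i; fin_cases i <;> simp [h.1, h.2])
    rcases hS01 with h0 | h1
    · refine ⟨v 0 / S 0, ?_⟩
      ext i; fin_cases i <;> simp [PiLp.smul_apply, smul_eq_mul]
      · field_simp
      · field_simp; linarith [hv]
    · refine ⟨v 1 / S 1, ?_⟩
      ext i; fin_cases i <;> simp [PiLp.smul_apply, smul_eq_mul]
      · field_simp; linarith [hv]
      · field_simp
  -- core chord lemma
  have hcore : ∀ x₂ p : E2, φ x₂ = 1 → φ (x₂ - S) = 1 → φ p ≤ 1 → φ (p - S) ≤ 1 →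
      ∀ a : ℝ, p - x₂ = a • S → a ≠ 0 → False := by
    intro x₂ p h1 h2 hp hpS a ha ha0
    have hp' : p = x₂ + a • S := by
      have := eq_add_of_sub_eq ha; rw [this]; abel
    rcases lt_or_gt_of_ne ha0 with hneg | hpos
    · -- a < 0 : x₂ - S is a strict combination of (p - S) and x₂
      have hb : (1:ℝ) - a ≠ 0 := by linarith
      have hkey : (1/(1-a)) • (p - S) + (1 - 1/(1-a)) • x₂ = x₂ - S := by
        rw [hp']; match_scalars <;> field_simp [hb] <;> ring
      have hne : p - S ≠ x₂ := by
        rw [hp']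
        intro h
        have : (a - 1) • S = 0 := by
          have := sub_eq_zero.mpr h
          rw [show x₂ + a • S - S - x₂ = (a-1) • S by module] at this
          exact this
        rcases smul_eq_zero.mp this with h' | h'
        · have : a = 1 := by linarith [sub_eq_zero.mp h']
          linarith
        · exact hS0 h'
      have hθ1 : (0:ℝ) < 1/(1-a) := by
        apply one_div_pos.mpr; linarith
      have hθ2 : (0:ℝ) < 1 - 1/(1-a) := by
        rw [sub_pos, div_lt_one (by linarith)]; linarith
      have := hopen (p - S) x₂ hpS (le_of_eq h1) hne _ _ hθ1 hθ2 (by ring)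
      rw [hkey] at this
      linarith [h2, this]
    · -- a > 0 : x₂ is a strict combination of p and (x₂ - S)
      have hb : (1:ℝ) + a ≠ 0 := by linarith
      have hkey : (1/(1+a)) • p + (1 - 1/(1+a)) • (x₂ - S) = x₂ := by
        rw [hp']; match_scalars <;> field_simp [hb] <;> ring
      have hne : p ≠ x₂ - S := by
        rw [hp']
        intro h
        have : (a + 1) • S = 0 := by
          have := sub_eq_zero.mpr h
          rw [show x₂ + a • S - (x₂ - S) = (a+1) • S by module] at this
          exact this
        rcases smul_eq_zero.mp this with h' | h'
        · linarith
        · exact hS0 h'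
      have hθ1 : (0:ℝ) < 1/(1+a) := by positivity
      have hθ2 : (0:ℝ) < 1 - 1/(1+a) := by
        rw [sub_pos, div_lt_one (by linarith)]; linarith
      have := hopen p (x₂ - S) hp (le_of_eq h2) hne _ _ hθ1 hθ2 (by ring)
      rw [hkey] at this
      linarith [h1, this]
  -- middle lemma: no solution can be f-between two other distinct solutions
  have hmid : ∀ x₁ x₂ x₃ : E2,
      φ x₁ = 1 → φ (x₁ - S) = 1 → φ x₂ = 1 → φ (x₂ - S) = 1 → φ x₃ = 1 → φ (x₃ - S) = 1 →
      x₁ ≠ x₂ → x₂ ≠ x₃ → x₁ ≠ x₃ →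
      ∀ μ ν : ℝ, 0 ≤ μ → 0 ≤ ν → μ + ν = 1 → f x₂ = μ * f x₁ + ν * f x₃ → False := by
    intro x₁ x₂ x₃ h1 h1' h2 h2' h3 h3' h12 h23 h13 μ ν hμ hν hμν hf2
    set p : E2 := μ • x₁ + ν • x₃ with hpdef
    have hp : φ p ≤ 1 := hconv.convex (by exact h1.le) (by exact h3.le) hμ hν hμν
    have hpS : φ (p - S) ≤ 1 := by
      have hps : p - S = μ • (x₁ - S) + ν • (x₃ - S) := by
        rw [hpdef]; match_scalars <;> linarith
      rw [hps]
      exact hconv.convex (by exact h1'.le) (by exact h3'.le) hμ hν hμν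
    have hfp : f (p - x₂) = 0 := by
      simp only [hf, hpdef, PiLp.sub_apply, PiLp.add_apply, PiLp.smul_apply, smul_eq_mul]
      simp only [hf] at hf2
      linear_combination -hf2
    obtain ⟨a, ha⟩ := hker _ hfp
    by_cases ha0 : a = 0
    · have hpx : p = x₂ := by
        rw [ha0, zero_smul] at ha; exact sub_eq_zero.mp ha
      rcases eq_or_lt_of_le hμ with hμ0 | hμpos
      · apply h23
        have : p = x₃ := by
          rw [hpdef, ← hμ0, zero_smul, zero_add, show ν = 1 by linarith, one_smul]
        rw [← hpx, this]
      rcases eq_or_lt_of_le hν with hν0 | hνpos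
      · apply h12
        have : p = x₁ := by
          rw [hpdef, ← hν0, zero_smul, add_zero, show μ = 1 by linarith, one_smul]
        rw [← this, hpx]
      · have := hopen x₁ x₃ h1.le h3.le h13 μ ν hμpos hνpos hμν
        rw [← hpdef, hpx] at this
        linarith [h2]
    · exact hcore x₂ p h2 h2' hp hpS a ha ha0
  -- betweenness helper on ℝ
  have hbet : ∀ x y z : ℝ, y ≤ x → x ≤ z →
      ∃ μ ν : ℝ, 0 ≤ μ ∧ 0 ≤ ν ∧ μ + ν = 1 ∧ x = μ * y + ν * z := by
    intro x y z h1 h2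
    rcases eq_or_lt_of_le (h1.trans h2) with h | h
    · refine ⟨1, 0, by norm_num, by norm_num, by ring, ?_⟩
      have : x = y := le_antisymm (by linarith) h1
      rw [this]; ring
    · have hzy : (0:ℝ) < z - y := by linarith
      refine ⟨(z-x)/(z-y), (x-y)/(z-y), div_nonneg (by linarith) hzy.le,
        div_nonneg (by linarith) hzy.le, ?_, ?_⟩
      · field_simp; ring
      · field_simp; ring
  -- the three solutions
  have hZeq : Z = S - Y := by linear_combination (norm := module) hYZ - hSdef
  have hZ'eq : Z' = S - Y' := by linear_combination (norm := module) hYZ' - hSdef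
  have solY : φ Y = 1 ∧ φ (Y - S) = 1 := by
    refine ⟨hY, ?_⟩
    have : Y - S = -Z := by rw [hZeq]; module
    rw [this, hneg]; exact hZ
  have solZ : φ Z = 1 ∧ φ (Z - S) = 1 := by
    refine ⟨hZ, ?_⟩
    have : Z - S = -Y := by rw [hZeq]; module
    rw [this, hneg]; exact hY
  have solY' : φ Y' = 1 ∧ φ (Y' - S) = 1 := by
    refine ⟨hY', ?_⟩
    have : Y' - S = -Z' := by rw [hZ'eq]; module
    rw [this, hneg]; exact hZ'
  -- suppose the conclusion fails
  by_contra hcon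
  push_neg at hcon
  obtain ⟨hc1, hc2⟩ := hcon
  have hYY' : Y ≠ Y' := by
    intro h; exact (hc1 h) (by rw [hZeq, hZ'eq, h])
  have hYZ'' : Y ≠ Z' := by
    intro h
    apply hc2 h
    linear_combination (norm := module) hZeq - h - hZ'eq
  have hZY' : Z ≠ Y' := by
    intro h
    apply hYZ''
    linear_combination (norm := module) hZeq - h - hZ'eq
  have hYZne : Y ≠ Z := by
    intro h
    have h2Y : S = (2:ℝ) • Y := by
      rw [hZeq] at h
      linear_combination (norm := module) (-1 : ℝ) • h
    rw [h2Y, hφ_hom, hY] at hS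
    norm_num at hS
  -- case analysis on which f-value is in the middle
  rcases le_total (f Y) (f Z) with hab | hab <;>
    rcases le_total (f Z) (f Y') with hbc | hbc <;>
      rcases le_total (f Y) (f Y') with hac | hac
  · obtain ⟨μ, ν, hμ, hν, hμν, he⟩ := hbet (f Z) (f Y) (f Y') hab hbc
    exact hmid Y Z Y' solY.1 solY.2 solZ.1 solZ.2 solY'.1 solY'.2 hYZne hZY' hYY' μ ν hμ hν hμν he
  · obtain ⟨μ, ν, hμ, hν, hμν, he⟩ := hbet (f Z) (f Y) (f Y') hab hbc
    exact hmid Y Z Y' solY.1 solY.2 solZ.1 solZ.2 solY'.1 solY'.2 hYZne hZY' hYY' μ ν hμ hν hμν he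
  · obtain ⟨μ, ν, hμ, hν, hμν, he⟩ := hbet (f Y') (f Y) (f Z) hac hbc
    exact hmid Y Y' Z solY.1 solY.2 solY'.1 solY'.2 solZ.1 solZ.2 hYY' (Ne.symm hZY') hYZne μ ν hμ hν hμν he
  · obtain ⟨μ, ν, hμ, hν, hμν, he⟩ := hbet (f Y) (f Y') (f Z) hac hab
    exact hmid Y' Y Z (solY'.1) (solY'.2) solY.1 solY.2 solZ.1 solZ.2 (Ne.symm hYY') hYZne (Ne.symm hZY') μ ν hμ hν hμν he
  · obtain ⟨μ, ν, hμ, hν, hμν, he⟩ := hbet (f Y) (f Z) (f Y') hab hac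
    exact hmid Z Y Y' solZ.1 solZ.2 solY.1 solY.2 solY'.1 solY'.2 (Ne.symm hYZne) hYY' hZY' μ ν hμ hν hμν he
  · obtain ⟨μ, ν, hμ, hν, hμν, he⟩ := hbet (f Y') (f Z) (f Y) hbc hac
    exact hmid Z Y' Y solZ.1 solZ.2 solY'.1 solY'.2 solY.1 solY.2 hZY' (Ne.symm hYY') (Ne.symm hYZne) μ ν hμ hν hμν he
  · obtain ⟨μ, ν, hμ, hν, hμν, he⟩ := hbet (f Z) (f Y') (f Y) hbc hab
    exact hmid Y' Z Y solY'.1 solY'.2 solZ.1 solZ.2 solY.1 solY.2 (Ne.symm hZY') (Ne.symm hYZne) (Ne.symm hYY') μ ν hμ hν hμν he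
  · obtain ⟨μ, ν, hμ, hν, hμν, he⟩ := hbet (f Z) (f Y') (f Y) hbc hab
    exact hmid Y' Z Y solY'.1 solY'.2 solZ.1 solZ.2 solY.1 solY.2 (Ne.symm hZY') (Ne.symm hYZne) (Ne.symm hYY') μ ν hμ hν hμν he
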